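/- If two rows r1, r2 of a puzzle P of width k have the value e in exactly the same set of columns for some e ∈ {1,2,3} and r1 ≠ r2, then P is not a uniquely solvable puzzle. -/
import Mathlib


/-- Exactly two of the three propositions hold. -/
def ExactlyTwo (A B C : Prop) : Prop :=
  (A ∧ B ∧ ¬C) ∨ (A ∧ ¬B ∧ C) ∨ (¬A ∧ B ∧ C)

/-- At least two of the three propositions hold. -/
def AtLeastTwo (A B C : Prop) : Prop :=
  (A ∧ B) ∨ (A ∧ C) ∨ (B ∧ C)

/-- A puzzle of width `k` is a finite set of rows in `{1,2,3}^k`; we use the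
alphabet `Fin 3` whose three elements are denoted `1`, `2`, `3` (`3 = 0`).
`P` is a strong uniquely solvable puzzle (strong USP). -/
def IsSUSP {k : ℕ} (P : Finset (Fin k → Fin 3)) : Prop :=
  ∀ π₁ π₂ π₃ : Equiv.Perm {r // r ∈ P},
    (π₁ = π₂ ∧ π₂ = π₃) ∨
    ∃ (r : {r // r ∈ P}) (c : Fin k),
      ExactlyTwo ((π₁ r).1 c = 1) ((π₂ r).1 c = 2) ((π₃ r).1 c = 3)

/-- `P` is a uniquely solvable puzzle (USP). -/
def IsUSP {k : ℕ} (P : Finset (Fin k → Fin 3)) : Prop :=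
  ∀ π₁ π₂ π₃ : Equiv.Perm {r // r ∈ P},
    (π₁ = π₂ ∧ π₂ = π₃) ∨
    ∃ (r : {r // r ∈ P}) (c : Fin k),
      AtLeastTwo ((π₁ r).1 c = 1) ((π₂ r).1 c = 2) ((π₃ r).1 c = 3)


/-- If two distinct rows of `P` have the value `e ∈ {1,2,3}` in exactly the
same set of columns, then `P` is not a uniquely solvable puzzle. -/
theorem repeated_piece_not_usp {k : ℕ} (P : Finset (Fin k → Fin 3))
    (e : Fin 3) (he : e = 1 ∨ e = 2 ∨ e = 3)
    (r₁ r₂ : Fin k → Fin 3) (hr₁ : r₁ ∈ P) (hr₂ : r₂ ∈ P) (hne : r₁ ≠ r₂)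
    (hsame : ∀ c : Fin k, r₁ c = e ↔ r₂ c = e) : ¬ IsUSP P := by
  intro hUSP
  set a : {r // r ∈ P} := ⟨r₁, hr₁⟩ with ha
  set b : {r // r ∈ P} := ⟨r₂, hr₂⟩ with hb
  have hab : a ≠ b := fun h => hne (congrArg Subtype.val h)
  set σ : Equiv.Perm {r // r ∈ P} := Equiv.swap a b with hσ
  have hσid : σ ≠ 1 := by
    intro h
    have : σ a = a := by rw [h]; rfl
    rw [hσ, Equiv.swap_apply_left] at this
    exact hab this.symm
  have key : ∀ r : {r // r ∈ P}, ∀ c, (σ r).1 c = e ↔ r.1 c = e := by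
    intro r c
    rcases eq_or_ne r a with rfl | hA
    · rw [hσ, Equiv.swap_apply_left]
      exact (hsame c).symm
    rcases eq_or_ne r b with rfl | hB
    · rw [hσ, Equiv.swap_apply_right]
      exact hsame c
    · rw [hσ, Equiv.swap_apply_of_ne_of_ne hA hB]
  rcases he with rfl | rfl | rfl
  · rcases hUSP σ 1 1 with ⟨h, -⟩ | ⟨r, c, h⟩
    · exact hσid h
    · simp only [Equiv.Perm.one_apply] at h
      rcases h with ⟨h1, h2⟩ | ⟨h1, h2⟩ | ⟨h1, h2⟩
      · have := (key r c).mp h1; rw [h2] at this; exact absurd this (by decide)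
      · have := (key r c).mp h1; rw [h2] at this; exact absurd this (by decide)
      · rw [h1] at h2; exact absurd h2 (by decide)
  · rcases hUSP 1 σ 1 with ⟨h, -⟩ | ⟨r, c, h⟩
    · exact hσid h.symm
    · simp only [Equiv.Perm.one_apply] at h
      rcases h with ⟨h1, h2⟩ | ⟨h1, h2⟩ | ⟨h1, h2⟩
      · have := (key r c).mp h2; rw [h1] at this; exact absurd this (by decide)
      · rw [h1] at h2; exact absurd h2 (by decide)
      · have := (key r c).mp h1; rw [h2] at this; exact absurd this (by decide)
  · rcases hUSP 1 1 σ with ⟨-, h⟩ | ⟨r, c, h⟩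
    · exact hσid h.symm
    · simp only [Equiv.Perm.one_apply] at h
      rcases h with ⟨h1, h2⟩ | ⟨h1, h2⟩ | ⟨h1, h2⟩
      · rw [h1] at h2; exact absurd h2 (by decide)
      · have := (key r c).mp h2; rw [h1] at this; exact absurd this (by decide)
      · have := (key r c).mp h2; rw [h1] at this; exact absurd this (by decide)
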